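/- Reversal identity for a single path: let P = u₀u₁…u_k be a path in G = (V, A, c), let B > 0, and let ←P = u_k…u₀ be its reversal, a path in the reversed graph ←G. Then the minimum initial charge of P equals the energetic cost of the reversed path from a full battery: b_B(P) = d_B^{←G}(←P). -/
import Mathlib


open scoped Classical

/-- The clamped addition `x ⊕_B y = [x + y]₀ᴮ` on `ℝ ∪ {∞}` (modeled inside `EReal`;
inputs are never `⊥`). -/
noncomputable def eplus (B : ℝ) (x y : EReal) : EReal :=
  if x + y < 0 then 0 else if x + y ≤ (B : EReal) then x + y else ⊤

/-- `batt B b cst i` is the charge `b_i` of the battery after traversing the first `i`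
arcs of a path whose `i`-th arc (0-indexed) has cost `cst i`, starting from charge `b`. -/
noncomputable def batt (B b : ℝ) (cst : ℕ → ℝ) : ℕ → ℝ
  | 0 => b
  | i + 1 => min (batt B b cst i - cst i) B

/-- The path with arc costs `cst 0, …, cst (k-1)` is traversable from initial charge `b`. -/
def Trav (B b : ℝ) (cst : ℕ → ℝ) (k : ℕ) : Prop :=
  ∀ i, i < k → cst i ≤ batt B b cst i

/-- The energetic cost `d_{B,b}(P) = b - b_k` of a path with arc costs
`cst 0, …, cst (k-1)`, or `∞` if not traversable from initial charge `b`. -/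
noncomputable def dE (B b : ℝ) (cst : ℕ → ℝ) (k : ℕ) : EReal :=
  if Trav B b cst k then ((b - batt B b cst k : ℝ) : EReal) else ⊤

/-- `u 0, u 1, …, u k` is a path in the graph with arc relation `Arc`. -/
def IsPath {V : Type*} (Arc : V → V → Prop) (u : ℕ → V) (k : ℕ) : Prop :=
  ∀ i, i < k → Arc (u i) (u (i + 1))

/-- The energetic cost `δ_{B,b}(s,t)`: the minimum of `d_{B,b}(P)` over all `s`–`t`
paths `P` (`∞` if there is none). -/
noncomputable def deltaE {V : Type*} (Arc : V → V → Prop) (c : V → V → ℝ)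
    (B b : ℝ) (s t : V) : EReal :=
  sInf { x : EReal | ∃ (u : ℕ → V) (k : ℕ), IsPath Arc u k ∧ u 0 = s ∧ u k = t ∧
    x = dE B b (fun i => c (u i) (u (i + 1))) k }

/-- The standard distance `δ(s,t)`: the infimum of total costs of `s`–`t` paths. -/
noncomputable def distE {V : Type*} (Arc : V → V → Prop) (c : V → V → ℝ)
    (s t : V) : EReal :=
  sInf { x : EReal | ∃ (u : ℕ → V) (k : ℕ), IsPath Arc u k ∧ u 0 = s ∧ u k = t ∧
    x = ((∑ i ∈ Finset.range k, c (u i) (u (i + 1)) : ℝ) : EReal) }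

/-- The graph has no negative cycles. -/
def NoNegCycles {V : Type*} (Arc : V → V → Prop) (c : V → V → ℝ) : Prop :=
  ∀ (u : ℕ → V) (k : ℕ), IsPath Arc u k → u k = u 0 → 1 ≤ k →
    0 ≤ ∑ i ∈ Finset.range k, c (u i) (u (i + 1))

lemma batt_congr (B b : ℝ) (e f : ℕ → ℝ) (n : ℕ) (h : ∀ i, i < n → e i = f i) :
    batt B b e n = batt B b f n := by
  induction n with
  | zero => rfl
  | succ n ih =>
    simp only [batt, ih (fun i hi => h i (Nat.lt_succ_of_lt hi)), h n (Nat.lt_succ_self n)]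

lemma trav_congr (B b : ℝ) (e f : ℕ → ℝ) (k : ℕ) (h : ∀ i, i < k → e i = f i) :
    Trav B b e k ↔ Trav B b f k := by
  constructor <;> intro ht i hi
  · rw [← h i hi, ← batt_congr B b e f i (fun j hj => h j (hj.trans hi))]; exact ht i hi
  · rw [h i hi, batt_congr B b e f i (fun j hj => h j (hj.trans hi))]; exact ht i hi

lemma batt_le (B b : ℝ) (hbB : b ≤ B) (e : ℕ → ℝ) (n : ℕ) : batt B b e n ≤ B := by
  cases n with
  | zero => exact hbB
  | succ n => exact min_le_right _ _

lemma batt_nonneg (B b : ℝ) (hB : 0 ≤ B) (hb : 0 ≤ b) (e : ℕ → ℝ) (n : ℕ)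
    (h : Trav B b e n) : 0 ≤ batt B b e n := by
  induction n with
  | zero => exact hb
  | succ n ih =>
    have h1 : 0 ≤ batt B b e n := ih (fun i hi => h i (Nat.lt_succ_of_lt hi))
    have h2 := h n (Nat.lt_succ_self n)
    exact le_min (by linarith) hB

lemma batt_shift (B b : ℝ) (e : ℕ → ℝ) (i : ℕ) :
    batt B b e (i + 1) = batt B (min (b - e 0) B) (fun j => e (j + 1)) i := by
  induction i with
  | zero => rfl
  | succ n ih =>
    rw [show batt B b e (n + 1 + 1) = min (batt B b e (n + 1) - e (n + 1)) B from rfl, ih]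
    rfl

lemma trav_succ_head (B b : ℝ) (e : ℕ → ℝ) (j : ℕ) :
    Trav B b e (j + 1) ↔ e 0 ≤ b ∧ Trav B (min (b - e 0) B) (fun i => e (i + 1)) j := by
  constructor
  · intro h
    refine ⟨h 0 (Nat.succ_pos j), fun i hi => ?_⟩
    have := h (i + 1) (by omega)
    rwa [batt_shift] at this
  · rintro ⟨h0, h⟩ i hi
    cases i with
    | zero => exact h0
    | succ n => rw [batt_shift]; exact h n (by omega)

lemma trav_succ_last (B b : ℝ) (e : ℕ → ℝ) (j : ℕ) :
    Trav B b e (j + 1) ↔ Trav B b e j ∧ e j ≤ batt B b e j := by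
  constructor
  · intro h; exact ⟨fun i hi => h i (by omega), h j (by omega)⟩
  · rintro ⟨h, hj⟩ i hi
    rcases Nat.lt_succ_iff_lt_or_eq.mp hi with h' | h'
    · exact h i h'
    · subst h'; exact hj

lemma key (B : ℝ) (hB : 0 < B) (d : ℕ → ℝ) (k : ℕ) :
    ∀ j, j ≤ k → ∀ b, 0 ≤ b → b ≤ B →
      (Trav B b (fun i => d (k - j + i)) j ↔
        Trav B B (fun i => d (k - 1 - i)) j ∧
          B - batt B B (fun i => d (k - 1 - i)) j ≤ b) := by
  intro j
  induction j with
  | zero =>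
    intro _ b hb0 hbB
    constructor
    · intro _
      refine ⟨fun i hi => absurd hi (Nat.not_lt_zero i), ?_⟩
      show B - B ≤ b
      linarith
    · intro _ i hi
      exact absurd hi (Nat.not_lt_zero i)
  | succ j ih =>
    intro hjk b hb0 hbB
    have hjk' : j ≤ k := Nat.le_of_succ_le hjk
    set d' : ℕ → ℝ := fun i => d (k - 1 - i) with hd'
    have he0 : k - (j + 1) + 0 = k - 1 - j := by omega
    have hfun : (fun i => (fun i => d (k - (j + 1) + i)) (i + 1)) = (fun i => d (k - j + i)) := by
      funext i
      show d (k - (j + 1) + (i + 1)) = d (k - j + i)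
      congr 1
      omega
    have hbattj1 : batt B B d' (j + 1) = min (batt B B d' j - d' j) B := rfl
    rw [trav_succ_head, hfun, trav_succ_last, hbattj1]
    have he0' : d (k - (j + 1) + 0) = d' j := by
      show d (k - (j + 1) + 0) = d (k - 1 - j)
      congr 1
    rw [he0']
    constructor
    · rintro ⟨hd0, htr⟩
      have hbm0 : 0 ≤ min (b - d' j) B := le_min (by linarith) hB.le
      obtain ⟨hT, hm⟩ := (ih hjk' (min (b - d' j) B) hbm0 (min_le_right _ _)).mp htr
      have hm1 : B - batt B B d' j ≤ b - d' j := hm.trans (min_le_left _ _)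
      have hm2 : B - batt B B d' j ≤ B := hm.trans (min_le_right _ _)
      refine ⟨⟨hT, by linarith⟩, ?_⟩
      have hmin : B - b ≤ min (batt B B d' j - d' j) B := le_min (by linarith) (by linarith)
      linarith
    · rintro ⟨⟨hT, hlast⟩, hm1⟩
      have h2 : min (batt B B d' j - d' j) B ≤ batt B B d' j - d' j := min_le_left _ _
      have hmb : B - batt B B d' j + d' j ≤ b := by linarith
      have hbatt0 : 0 ≤ batt B B d' j := batt_nonneg B B hB.le hB.le d' j hT
      have hbattB : batt B B d' j ≤ B := batt_le B B le_rfl d' j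
      have hd0 : d' j ≤ b := by linarith
      refine ⟨hd0, (ih hjk' (min (b - d' j) B) (le_min (by linarith) hB.le) (min_le_right _ _)).mpr
        ⟨hT, le_min (by linarith) (by linarith)⟩⟩

/-- reversal identity for a single path: the reversal `←P = u_k…u₀` of
a path `P = u₀…u_k` in `G` is a path in the reversed graph `←G`, and the minimum
initial charge of `P` equals the energetic cost of `←P` in `←G` from a full battery:
`b_B(P) = d_B^{←G}(←P)`. -/
theorem min_initial_charge_eq_reverse_cost {V : Type*} [Fintype V]
    (Arc : V → V → Prop) (c : V → V → ℝ) (B : ℝ) (hB : 0 < B)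
    (u : ℕ → V) (k : ℕ) (hP : IsPath Arc u k) :
    IsPath (fun x y => Arc y x) (fun i => u (k - i)) k ∧
    sInf { x : EReal | ∃ b : ℝ, 0 ≤ b ∧ b ≤ B ∧
        Trav B b (fun i => c (u i) (u (i + 1))) k ∧ x = ((b : ℝ) : EReal) } =
      dE B B (fun i => c (u (k - (i + 1))) (u (k - i))) k := by
  constructor
  · intro i hi
    have h := hP (k - (i + 1)) (by omega)
    have e1 : k - (i + 1) + 1 = k - i := by omega
    rw [e1] at h
    exact h
  · set d : ℕ → ℝ := fun i => c (u i) (u (i + 1)) with hd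
    set d' : ℕ → ℝ := fun i => d (k - 1 - i) with hd'
    set e : ℕ → ℝ := fun i => c (u (k - (i + 1))) (u (k - i)) with he
    have hed' : ∀ i, i < k → e i = d' i := by
      intro i hi
      show c (u (k - (i + 1))) (u (k - i)) = c (u (k - 1 - i)) (u (k - 1 - i + 1))
      rw [show k - (i + 1) = k - 1 - i from by omega, show k - i = k - 1 - i + 1 from by omega]
    have hdd : ∀ i, i < k → d i = (fun i => d (k - k + i)) i := by
      intro i hi
      show d i = d (k - k + i)
      congr 1
      omega
    have hkey : ∀ b : ℝ, 0 ≤ b → b ≤ B →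
        (Trav B b d k ↔ Trav B B d' k ∧ B - batt B B d' k ≤ b) := by
      intro b hb0 hbB
      rw [trav_congr B b d _ k hdd]
      exact key B hB d k k le_rfl b hb0 hbB
    by_cases hT : Trav B B d' k
    · have hTe : Trav B B e k := (trav_congr B B e d' k hed').mpr hT
      have hbe : batt B B e k = batt B B d' k := batt_congr B B e d' k hed'
      rw [dE, if_pos hTe, hbe]
      have hm0 : 0 ≤ B - batt B B d' k := by
        have := batt_le B B le_rfl d' k; linarith
      have hmB : B - batt B B d' k ≤ B := by
        have := batt_nonneg B B hB.le hB.le d' k hT; linarith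
      apply le_antisymm
      · exact sInf_le ⟨B - batt B B d' k, hm0, hmB,
          (hkey _ hm0 hmB).mpr ⟨hT, le_refl _⟩, rfl⟩
      · apply le_sInf
        rintro x ⟨b, hb0, hbB, htr, rfl⟩
        exact_mod_cast EReal.coe_le_coe_iff.mpr ((hkey b hb0 hbB).mp htr).2
    · have hTe : ¬ Trav B B e k := fun h => hT ((trav_congr B B e d' k hed').mp h)
      rw [dE, if_neg hTe]
      have hempty : { x : EReal | ∃ b : ℝ, 0 ≤ b ∧ b ≤ B ∧ Trav B b d k ∧ x = ((b : ℝ) : EReal) }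
          = ∅ := by
        apply Set.eq_empty_iff_forall_notMem.mpr
        rintro x ⟨b, hb0, hbB, htr, rfl⟩
        exact hT ((hkey b hb0 hbB).mp htr).1
      rw [hempty, sInf_empty]
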